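/- For a path-connected space X, the n-th homotopic distance of the n coordinate projections pr_1,...,pr_n : X^n → X equals the n-th topological complexity: D(pr_1,...,pr_n) = TC_n(X). -/

import Mathlib

open Set

/-- The `n`-th homotopic distance of maps `f 0, …, f (n-1) : X → Y`:
the least `k` admitting an open cover `U 0, …, U k` of `X` on each element of
which all the maps are pairwise homotopic; `∞` if no such cover exists. -/
noncomputable def homDist {X Y : Type*} [TopologicalSpace X] [TopologicalSpace Y]
    {n : ℕ} (f : Fin n → C(X, Y)) : ℕ∞ :=
  sInf ((fun k : ℕ => (k : ℕ∞)) '' {k | ∃ U : Fin (k + 1) → Set X,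
    (∀ j, IsOpen (U j)) ∧ (⋃ j, U j) = Set.univ ∧
    ∀ j i i', ((f i).restrict (U j)).Homotopic ((f i').restrict (U j))})

/-- The sectional category of a map `q : E → B`: the least `k` such that `B`
has an open cover of `k+1` open sets each admitting a continuous local section. -/
noncomputable def secat {E B : Type*} [TopologicalSpace E] [TopologicalSpace B]
    (q : C(E, B)) : ℕ∞ :=
  sInf ((fun k : ℕ => (k : ℕ∞)) '' {k | ∃ U : Fin (k + 1) → Set B,
    (∀ j, IsOpen (U j)) ∧ (⋃ j, U j) = Set.univ ∧
    ∀ j, ∃ s : C(U j, E), ∀ x : U j, q (s x) = (x : B)})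

/-- Projection of `X^n` onto the `i`-th factor. -/
def prMap (X : Type*) [TopologicalSpace X] (n : ℕ) (i : Fin n) :
    C((Fin n → X), X) :=
  ⟨fun x => x i, continuous_apply i⟩

/-- The space `X^{J_n}` of `n`-legged paths in `X`: `n` paths with a common
initial point (the wedge of `n` intervals glued at `0`, mapped into `X`). -/
abbrev NLegged (X : Type*) [TopologicalSpace X] (n : ℕ) : Type _ :=
  {γ : Fin n → C(unitInterval, X) // ∀ i j : Fin n, γ i 0 = γ j 0}

/-- The fibration `e_n : X^{J_n} → X^n` evaluating at the `n` free endpoints. -/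
def enMap (X : Type*) [TopologicalSpace X] (n : ℕ) :
    C(NLegged X n, Fin n → X) :=
  ⟨fun γ i => (γ.1 i) 1, by
    apply continuous_pi; intro i
    exact (continuous_eval_const (F := C(unitInterval, X)) 1).comp
      ((continuous_apply i).comp continuous_subtype_val)⟩



open unitInterval in
lemma exists_section_of_homotopies {X : Type*} [TopologicalSpace X] {n : ℕ}
    (U : Set (Fin n → X))
    (h : ∀ i i' : Fin n,
      ((prMap X n i).restrict U).Homotopic ((prMap X n i').restrict U)) :
    ∃ s : C(U, NLegged X n), ∀ x : U, enMap X n (s x) = (x : Fin n → X) := by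
  cases n with
  | zero =>
      refine ⟨⟨fun _ => ⟨fun i => i.elim0, fun i => i.elim0⟩, continuous_const⟩, ?_⟩
      intro x; funext i; exact i.elim0
  | succ m =>
      let F : ∀ i : Fin (m + 1),
          ContinuousMap.Homotopy ((prMap X (m+1) i).restrict U)
            ((prMap X (m+1) 0).restrict U) := fun i => (h i 0).some
      let G : Fin (m + 1) → C(U, C(unitInterval, X)) := fun i =>
        ContinuousMap.curry ((F i).toContinuousMap.comp
          ⟨fun p : U × unitInterval => (unitInterval.symm p.2, p.1),
            (continuous_symm.comp continuous_snd).prodMk continuous_fst⟩)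
      have hG0 : ∀ (i : Fin (m + 1)) (x : U), G i x 0 = (x : Fin (m+1) → X) 0 := by
        intro i x
        show (F i).toContinuousMap (unitInterval.symm 0, x) = _
        rw [unitInterval.symm_zero]
        exact (F i).apply_one x
      have hG1 : ∀ (i : Fin (m + 1)) (x : U), G i x 1 = (x : Fin (m+1) → X) i := by
        intro i x
        show (F i).toContinuousMap (unitInterval.symm 1, x) = _
        rw [unitInterval.symm_one]
        exact (F i).apply_zero x
      refine ⟨⟨fun x => ⟨fun i => G i x, fun i j => by rw [hG0 i x, hG0 j x]⟩, ?_⟩, ?_⟩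
      · apply Continuous.subtype_mk
        exact continuous_pi fun i => (G i).continuous
      · intro x
        funext i
        exact hG1 i x

lemma homotopic_of_section {X : Type*} [TopologicalSpace X] {n : ℕ}
    (U : Set (Fin n → X)) (s : C(U, NLegged X n))
    (hs : ∀ x : U, enMap X n (s x) = (x : Fin n → X)) :
    ∀ i i' : Fin n,
      ((prMap X n i).restrict U).Homotopic ((prMap X n i').restrict U) := by
  intro i i'
  let c : Fin n → C(U, C(unitInterval, X)) := fun j =>
    ⟨fun x => (s x).1 j, (continuous_apply j).comp
      (continuous_subtype_val.comp s.continuous)⟩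
  let b : C(U, X) := ⟨fun x => (s x).1 i 0,
    (continuous_eval_const (F := C(unitInterval, X)) 0).comp (c i).continuous⟩
  have key : ∀ j : Fin n, ContinuousMap.Homotopic b ((prMap X n j).restrict U) := by
    intro j
    refine ⟨⟨((c j).uncurry.comp ⟨Prod.swap, continuous_swap⟩), ?_, ?_⟩⟩
    · intro x
      exact (s x).2 j i
    · intro x
      exact congrFun (hs x) j
  exact (key i).symm.trans (key i')

/-- For a path-connected space `X`, the homotopic distance of the `n` coordinate
projections equals the `n`-th topological complexity: `D(pr₁, …, prₙ) = TCₙ(X)`. -/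
theorem homDist_projections_eq_TC {X : Type*} [TopologicalSpace X]
    [PathConnectedSpace X] (n : ℕ) :
    homDist (prMap X n) = secat (enMap X n) := by
  refine congrArg sInf (congrArg _ ?_)
  ext k
  simp only [Set.mem_setOf_eq]
  constructor
  · rintro ⟨U, hUo, hUc, hH⟩
    exact ⟨U, hUo, hUc, fun j => exists_section_of_homotopies (U j) (hH j)⟩
  · rintro ⟨U, hUo, hUc, hS⟩
    refine ⟨U, hUo, hUc, fun j => ?_⟩
    obtain ⟨s, hs⟩ := hS j
    exact homotopic_of_section (U j) s hs
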